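/- Let (A, B, C, m) be an acyclic partial matching on a multifiltered S-complex (S, κ) satisfying σ ∈ S^α ⟹ m(σ) ∈ S^α. Enumerate A = {A(1), ..., A(n)} and perform the n successive reductions at the pairs (m(A(i)), A(i)). Then the final complex has underlying set C, and for every α ⪯ β in ℝ^k and every q, the persistent homology H_q^{α,β}(S) is isomorphic to H_q^{α,β}(C). -/

import Mathlib

/-- An `S`-complex over a ring `R`: a finite graded set with a coincidence index `κ`
raising dimension by one and whose induced boundary squares to zero. -/
structure SComplex (R S : Type*) [CommRing R] [Fintype S] [DecidableEq S] where
  dim : S → ℕ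
  κ : S → S → R
  dim_rule : ∀ σ τ, κ σ τ ≠ 0 → dim σ = dim τ + 1
  dsq : ∀ σ ξ, ∑ τ, κ σ τ * κ τ ξ = 0

/-- A partial matching `(A, B, C, m)` on an `S`-complex: a partition of `S` together
with a bijection `m : A → B` such that `κ(m τ, τ)` is invertible for `τ ∈ A`. -/
structure PartialMatching {R S : Type*} [CommRing R] [Fintype S] [DecidableEq S]
    (X : SComplex R S) where
  A : Set S
  B : Set S
  C : Set S
  m : S → S
  cover : A ∪ B ∪ C = Set.univ
  disjAB : Disjoint A B
  disjAC : Disjoint A C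
  disjBC : Disjoint B C
  bij : Set.BijOn m A B
  unit : ∀ τ ∈ A, IsUnit (X.κ (m τ) τ)

/-- Acyclicity of a partial matching: there is no nontrivial sequence
`σ₀, m σ₀, σ₁, m σ₁, …, σ_p, m σ_p, σ_{p+1} = σ₀` with `σ_{i+1} ≠ σ_i` and `σ_{i+1}`
a primary face of `m σ_i`. -/
def PartialMatching.Acyclic {R S : Type*} [CommRing R] [Fintype S] [DecidableEq S]
    {X : SComplex R S} (M : PartialMatching X) : Prop :=
  ¬ ∃ (p : ℕ) (σ : ℕ → S), (∀ i ≤ p, σ i ∈ M.A) ∧ σ (p + 1) = σ 0 ∧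
      ∀ i ≤ p, σ (i + 1) ≠ σ i ∧ X.κ (M.m (σ i)) (σ (i + 1)) ≠ 0

/-- The reduced coincidence index obtained by reduction of the pair `(m σ₀, σ₀)`:
`κ̄(η, ξ) = κ(η, ξ) − κ(η, σ₀)·κ(m σ₀, ξ)/κ(m σ₀, σ₀)`. -/
noncomputable def reducedKappa {R S : Type*} [CommRing R] [Fintype S] [DecidableEq S]
    (X : SComplex R S) (M : PartialMatching X) (σ₀ : S) : S → S → R :=
  fun η ξ => X.κ η ξ - X.κ η σ₀ * Ring.inverse (X.κ (M.m σ₀) σ₀) * X.κ (M.m σ₀) ξ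

/-- The boundary operator induced by a coincidence index `κ`, as a linear
endomorphism of the free module `C_*(S) = S →₀ R`. -/
noncomputable def bdryL {R S : Type*} [CommRing R] [Fintype S] [DecidableEq S]
    (κ : S → S → R) : (S →₀ R) →ₗ[R] (S →₀ R) :=
  Finsupp.lsum R fun η =>
    LinearMap.toSpanSingleton R (S →₀ R) (∑ ξ, Finsupp.single ξ (κ η ξ))

/-- The submodule of cycles supported in `T` (typically `T = S^α ∩ {dim = q}`). -/
noncomputable def cyclesIn {R S : Type*} [CommRing R] [Fintype S] [DecidableEq S]
    (κ : S → S → R) (T : Set S) : Submodule R (S →₀ R) :=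
  Finsupp.supported R R T ⊓ LinearMap.ker (bdryL κ)

/-- The submodule of boundaries of chains supported in `T`
(typically `T = S^β ∩ {dim = q+1}`). -/
noncomputable def bdriesIn {R S : Type*} [CommRing R] [Fintype S] [DecidableEq S]
    (κ : S → S → R) (T : Set S) : Submodule R (S →₀ R) :=
  Submodule.map (bdryL κ) (Finsupp.supported R R T)

/-- The `q`-th persistent homology module of a filtered complex at `(α, β)`: the image
of the module of `q`-cycles of `S^α` (`Tz = S^α ∩ {dim = q}`) in the quotient by the
boundaries coming from `S^β` (`Tb = S^β ∩ {dim = q+1}`); this realizes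
`im (H_q(S^α) → H_q(S^β)) ≅ Z_q^α / (Z_q^α ∩ B_q^β)`. -/
abbrev persHom {R S : Type*} [CommRing R] [Fintype S] [DecidableEq S]
    (κ : S → S → R) (Tz Tb : Set S) : Type _ :=
  ↥(Submodule.map (bdriesIn κ Tb).mkQ (cyclesIn κ Tz))

/-- One elementary reduction of the coincidence index at the matched pair `(m a, a)`. -/
noncomputable def reduceOne {R S : Type*} [CommRing R] (m : S → S) (a : S)
    (κ : S → S → R) : S → S → R :=
  fun η ξ => κ η ξ - κ η a * Ring.inverse (κ (m a) a) * κ (m a) ξ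

/-- The successive reductions at the pairs `(m a, a)`, `a` running through the list `l`
(the head of the list is reduced first). -/
noncomputable def reduceList {R S : Type*} [CommRing R] (m : S → S) :
    List S → (S → S → R) → S → S → R
  | [], κ => κ
  | a :: l, κ => reduceList m l (reduceOne m a κ)

/-- Restriction of a coincidence index to a subset `C` (extended by zero outside `C`),
modelling the final complex with underlying set `C`. -/
noncomputable def restrictKappa {R S : Type*} [CommRing R] (κ : S → S → R)
    (C : Set S) : S → S → R :=
  fun η ξ => open Classical in if η ∈ C ∧ ξ ∈ C then κ η ξ else 0
set_option linter.unusedSectionVars false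
set_option linter.unreachableTactic false
set_option linter.unusedTactic false

section Aux
variable {R S : Type*} [CommRing R] [Fintype S] [DecidableEq S]

/-- matrix product in "composition of bdryL" order: apply `M` then `M'`. -/
def matMul (M M' : S → S → R) : S → S → R := fun η ξ => ∑ τ, M η τ * M' τ ξ

def deltaM : S → S → R := fun η ξ => if η = ξ then 1 else 0

lemma bdryL_apply (κ : S → S → R) (x : S →₀ R) (ξ : S) :
    bdryL κ x ξ = ∑ η, x η * κ η ξ := by
  classical
  rw [bdryL, Finsupp.lsum_apply]
  rw [Finsupp.sum_fintype]
  · rw [Finsupp.finset_sum_apply]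
    refine Finset.sum_congr rfl fun η _ => ?_
    rw [LinearMap.toSpanSingleton_apply, Finsupp.smul_apply, Finsupp.finset_sum_apply]
    simp [Finsupp.single_apply, Finset.sum_ite_eq, mul_comm]
  · intro η; simp

lemma bdryL_comp (M M' : S → S → R) (x : S →₀ R) :
    bdryL M' (bdryL M x) = bdryL (matMul M M') x := by
  ext ξ
  rw [bdryL_apply, bdryL_apply]
  simp only [bdryL_apply, matMul, Finset.sum_mul, Finset.mul_sum]
  rw [Finset.sum_comm]
  exact Finset.sum_congr rfl fun τ _ => Finset.sum_congr rfl fun η _ => by ring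

lemma bdryL_deltaM (x : S →₀ R) : bdryL (deltaM) x = x := by
  ext ξ
  rw [bdryL_apply]
  simp [deltaM, Finset.sum_ite_eq, mul_comm]

lemma matMul_assoc (M₁ M₂ M₃ : S → S → R) :
    matMul (matMul M₁ M₂) M₃ = matMul M₁ (matMul M₂ M₃) := by
  funext η ξ
  simp only [matMul, Finset.sum_mul, Finset.mul_sum]
  rw [Finset.sum_comm]
  exact Finset.sum_congr rfl fun τ _ => Finset.sum_congr rfl fun σ _ => by ring

lemma bdryL_congr_of_support {M M' : S → S → R} {x : S →₀ R}
    (h : ∀ η, x η ≠ 0 → M η = M' η) : bdryL M x = bdryL M' x := by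
  ext ξ
  rw [bdryL_apply, bdryL_apply]
  refine Finset.sum_congr rfl fun η _ => ?_
  by_cases hx : x η = 0
  · simp [hx]
  · rw [h η hx]

lemma bdryL_supported {M : S → S → R} {T T' : Set S}
    (h : ∀ η ∈ T, ∀ ξ, M η ξ ≠ 0 → ξ ∈ T') {x : S →₀ R}
    (hx : x ∈ Finsupp.supported R R T) : bdryL M x ∈ Finsupp.supported R R T' := by
  rw [Finsupp.mem_supported'] at hx ⊢
  intro ξ hξ
  rw [bdryL_apply]
  refine Finset.sum_eq_zero fun η _ => ?_
  by_cases hx0 : x η = 0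
  · simp [hx0]
  · by_cases hM : M η ξ = 0
    · simp [hM]
    · exact absurd (h η (by by_contra hT; exact hx0 (hx η hT)) ξ hM) hξ

end Aux
section Pers
variable {R S : Type*} [CommRing R] [Fintype S] [DecidableEq S]

noncomputable def persMap (κ₁ κ₂ : S → S → R) (Tz₁ Tb₁ Tz₂ Tb₂ : Set S)
    (f : (S →₀ R) →ₗ[R] (S →₀ R))
    (hb : bdriesIn κ₁ Tb₁ ≤ (bdriesIn κ₂ Tb₂).comap f)
    (hc : cyclesIn κ₁ Tz₁ ≤ (cyclesIn κ₂ Tz₂).comap f) :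
    persHom κ₁ Tz₁ Tb₁ →ₗ[R] persHom κ₂ Tz₂ Tb₂ :=
  (Submodule.mapQ _ _ f hb).restrict (by
    rintro x ⟨y, hy, rfl⟩
    rw [Submodule.mkQ_apply, Submodule.mapQ_apply]
    exact ⟨f y, hc hy, rfl⟩)

lemma persMap_coe (κ₁ κ₂ : S → S → R) (Tz₁ Tb₁ Tz₂ Tb₂ : Set S)
    (f : (S →₀ R) →ₗ[R] (S →₀ R)) (hb hc) (z : persHom κ₁ Tz₁ Tb₁) :
    ((persMap κ₁ κ₂ Tz₁ Tb₁ Tz₂ Tb₂ f hb hc z : persHom κ₂ Tz₂ Tb₂) :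
      (S →₀ R) ⧸ bdriesIn κ₂ Tb₂) = Submodule.mapQ _ _ f hb (z : (S →₀ R) ⧸ bdriesIn κ₁ Tb₁) :=
  rfl

noncomputable def persEquiv (κ₁ κ₂ : S → S → R) (Tz₁ Tb₁ Tz₂ Tb₂ : Set S)
    (f g : (S →₀ R) →ₗ[R] (S →₀ R))
    (hfb : bdriesIn κ₁ Tb₁ ≤ (bdriesIn κ₂ Tb₂).comap f)
    (hfc : cyclesIn κ₁ Tz₁ ≤ (cyclesIn κ₂ Tz₂).comap f)
    (hgb : bdriesIn κ₂ Tb₂ ≤ (bdriesIn κ₁ Tb₁).comap g)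
    (hgc : cyclesIn κ₂ Tz₂ ≤ (cyclesIn κ₁ Tz₁).comap g)
    (hgf : ∀ x ∈ cyclesIn κ₁ Tz₁, g (f x) - x ∈ bdriesIn κ₁ Tb₁)
    (hfg : ∀ y ∈ cyclesIn κ₂ Tz₂, f (g y) - y ∈ bdriesIn κ₂ Tb₂) :
    persHom κ₁ Tz₁ Tb₁ ≃ₗ[R] persHom κ₂ Tz₂ Tb₂ := by
  refine LinearEquiv.ofLinear (persMap κ₁ κ₂ Tz₁ Tb₁ Tz₂ Tb₂ f hfb hfc)
    (persMap κ₂ κ₁ Tz₂ Tb₂ Tz₁ Tb₁ g hgb hgc) ?_ ?_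
  · ext z
    show (((persMap κ₁ κ₂ Tz₁ Tb₁ Tz₂ Tb₂ f hfb hfc)
        ((persMap κ₂ κ₁ Tz₂ Tb₂ Tz₁ Tb₁ g hgb hgc) z) : persHom κ₂ Tz₂ Tb₂) :
        (S →₀ R) ⧸ bdriesIn κ₂ Tb₂) = (z : (S →₀ R) ⧸ bdriesIn κ₂ Tb₂)
    rw [persMap_coe, persMap_coe]
    obtain ⟨y, hy, hval⟩ := z.2
    rw [← hval, Submodule.mkQ_apply, Submodule.mapQ_apply, Submodule.mapQ_apply]
    rw [Submodule.Quotient.eq]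
    exact hfg y hy
  · ext z
    show (((persMap κ₂ κ₁ Tz₂ Tb₂ Tz₁ Tb₁ g hgb hgc)
        ((persMap κ₁ κ₂ Tz₁ Tb₁ Tz₂ Tb₂ f hfb hfc) z) : persHom κ₁ Tz₁ Tb₁) :
        (S →₀ R) ⧸ bdriesIn κ₁ Tb₁) = (z : (S →₀ R) ⧸ bdriesIn κ₁ Tb₁)
    rw [persMap_coe, persMap_coe]
    obtain ⟨y, hy, hval⟩ := z.2
    rw [← hval, Submodule.mkQ_apply, Submodule.mapQ_apply, Submodule.mapQ_apply]
    rw [Submodule.Quotient.eq]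
    exact hgf y hy

end Pers
section Step
variable {R S : Type*} [CommRing R] [Fintype S] [DecidableEq S]

/-- auxiliary matrices for the reduction at the pair `(b, a)` -/
noncomputable def fMat (lam : S → S → R) (a b : S) : S → S → R :=
  fun η ξ => if ξ = b ∧ ¬ η = b then -(lam η a * Ring.inverse (lam b a)) else 0

noncomputable def gMat (lam : S → S → R) (a b : S) : S → S → R :=
  fun η ξ => if η = a ∧ ¬ ξ = a then Ring.inverse (lam b a) * lam b ξ else 0

noncomputable def PhiM (lam : S → S → R) (a b : S) : S → S → R :=
  fun η ξ => deltaM η ξ + fMat lam a b η ξ + gMat lam a b η ξ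

noncomputable def PhiI (lam : S → S → R) (a b : S) : S → S → R :=
  fun η ξ => deltaM η ξ - fMat lam a b η ξ - gMat lam a b η ξ

noncomputable def kppM (lam : S → S → R) (a b : S) : S → S → R :=
  fun η ξ => if η = b ∧ ξ = a then lam b a
    else if η = a ∨ η = b ∨ ξ = a ∨ ξ = b then 0
    else lam η ξ - lam η a * Ring.inverse (lam b a) * lam b ξ

noncomputable def muMat (lam : S → S → R) (a b : S) : S → S → R :=
  fun η ξ => if η = a ∨ η = b ∨ ξ = a ∨ ξ = b then 0
    else lam η ξ - lam η a * Ring.inverse (lam b a) * lam b ξ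

def piMat (a b : S) : S → S → R :=
  fun η ξ => if η = ξ ∧ ¬ η = a ∧ ¬ η = b then 1 else 0

lemma sum_erase_pair {a b : S} (hne : a ≠ b) (h : S → R) :
    ∑ τ, (if τ = a ∨ τ = b then 0 else h τ) = (∑ τ, h τ) - h a - h b := by
  have key : ∀ τ, (if τ = a ∨ τ = b then 0 else h τ)
      = h τ - (if τ = a then h a else 0) - (if τ = b then h b else 0) := by
    intro τ
    by_cases h1 : τ = a <;> by_cases h2 : τ = b <;> simp [h1, h2, hne, Ne.symm hne] <;> ring
  simp [key, Finset.sum_sub_distrib, Finset.sum_ite_eq']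

lemma matMul_deltaM (M : S → S → R) : matMul M deltaM = M := by
  funext η ξ; simp [matMul, deltaM, Finset.sum_ite_eq, mul_comm]

lemma deltaM_matMul (M : S → S → R) : matMul deltaM M = M := by
  funext η ξ; simp [matMul, deltaM, Finset.sum_ite_eq', mul_comm]

end Step
section MatId
variable {R S : Type*} [CommRing R] [Fintype S] [DecidableEq S]
variable (lam : S → S → R) (a b : S)

lemma NN_zero (hu : IsUnit (lam b a)) (hne : a ≠ b)
    (haa : lam a a = 0) (hbb : lam b b = 0)
    (hdsq : ∀ η ξ, ∑ τ, lam η τ * lam τ ξ = 0) (η ξ : S) :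
    ∑ τ, (fMat lam a b η τ + gMat lam a b η τ) * (fMat lam a b τ ξ + gMat lam a b τ ξ) = 0 := by
  set v := Ring.inverse (lam b a) with hv
  have hpt : ∀ τ, (fMat lam a b η τ + gMat lam a b η τ) * (fMat lam a b τ ξ + gMat lam a b τ ξ)
      = if η = a ∧ ξ = b then (v * lam b τ) * (-(lam τ a * v)) else 0 := by
    intro τ
    by_cases h1 : η = a <;> by_cases h2 : ξ = b <;> by_cases h3 : τ = a <;>
      by_cases h4 : τ = b <;> by_cases h5 : η = b <;> by_cases h6 : ξ = a <;>
      simp_all [fMat, gMat, hne, Ne.symm hne] <;> ring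
  rw [Finset.sum_congr rfl fun τ _ => hpt τ]
  by_cases h : η = a ∧ ξ = b
  · simp only [h, if_true, and_self]
    have : ∀ τ, (v * lam b τ) * (-(lam τ a * v)) = (-(v*v)) * (lam b τ * lam τ a) := by
      intro τ; ring
    rw [Finset.sum_congr rfl fun τ _ => this τ, ← Finset.mul_sum, hdsq b a, mul_zero]
  · simp [h]

lemma PhiM_PhiI (hu : IsUnit (lam b a)) (hne : a ≠ b)
    (haa : lam a a = 0) (hbb : lam b b = 0)
    (hdsq : ∀ η ξ, ∑ τ, lam η τ * lam τ ξ = 0) :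
    matMul (PhiM lam a b) (PhiI lam a b) = deltaM := by
  funext η ξ
  have hpt : ∀ τ, PhiM lam a b η τ * PhiI lam a b τ ξ
      = deltaM η τ * deltaM τ ξ
        + (fMat lam a b η τ + gMat lam a b η τ) * deltaM τ ξ
        - deltaM η τ * (fMat lam a b τ ξ + gMat lam a b τ ξ)
        - (fMat lam a b η τ + gMat lam a b η τ) * (fMat lam a b τ ξ + gMat lam a b τ ξ) := by
    intro τ; simp only [PhiM, PhiI]; ring
  show (∑ τ, PhiM lam a b η τ * PhiI lam a b τ ξ) = deltaM η ξ
  rw [Finset.sum_congr rfl fun τ _ => hpt τ]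
  simp only [Finset.sum_sub_distrib, Finset.sum_add_distrib,
    NN_zero lam a b hu hne haa hbb hdsq η ξ]
  have h1 : ∑ τ, deltaM (R := R) η τ * deltaM τ ξ = deltaM η ξ := by
    simp [deltaM, Finset.sum_ite_eq', mul_comm]
  have h2 : ∑ τ, (fMat lam a b η τ + gMat lam a b η τ) * deltaM τ ξ
      = fMat lam a b η ξ + gMat lam a b η ξ := by
    have : ∀ τ, (fMat lam a b η τ + gMat lam a b η τ) * deltaM τ ξ
        = if τ = ξ then fMat lam a b η τ + gMat lam a b η τ else 0 := by
      intro τ; by_cases h : τ = ξ <;> simp [deltaM, h]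
    rw [Finset.sum_congr rfl fun τ _ => this τ]; simp [Finset.sum_ite_eq']
  have h3 : ∑ τ, deltaM (R := R) η τ * (fMat lam a b τ ξ + gMat lam a b τ ξ)
      = fMat lam a b η ξ + gMat lam a b η ξ := by
    have : ∀ τ, deltaM (R := R) η τ * (fMat lam a b τ ξ + gMat lam a b τ ξ)
        = if η = τ then fMat lam a b τ ξ + gMat lam a b τ ξ else 0 := by
      intro τ; by_cases h : η = τ <;> simp [deltaM, h]
    rw [Finset.sum_congr rfl fun τ _ => this τ]; simp [Finset.sum_ite_eq]
  rw [h1, h2, h3]; ring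

lemma PhiI_PhiM (hu : IsUnit (lam b a)) (hne : a ≠ b)
    (haa : lam a a = 0) (hbb : lam b b = 0)
    (hdsq : ∀ η ξ, ∑ τ, lam η τ * lam τ ξ = 0) :
    matMul (PhiI lam a b) (PhiM lam a b) = deltaM := by
  funext η ξ
  have hpt : ∀ τ, PhiI lam a b η τ * PhiM lam a b τ ξ
      = deltaM η τ * deltaM τ ξ
        - (fMat lam a b η τ + gMat lam a b η τ) * deltaM τ ξ
        + deltaM η τ * (fMat lam a b τ ξ + gMat lam a b τ ξ)
        - (fMat lam a b η τ + gMat lam a b η τ) * (fMat lam a b τ ξ + gMat lam a b τ ξ) := by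
    intro τ; simp only [PhiM, PhiI]; ring
  show (∑ τ, PhiI lam a b η τ * PhiM lam a b τ ξ) = deltaM η ξ
  rw [Finset.sum_congr rfl fun τ _ => hpt τ]
  simp only [Finset.sum_sub_distrib, Finset.sum_add_distrib,
    NN_zero lam a b hu hne haa hbb hdsq η ξ]
  have h1 : ∑ τ, deltaM (R := R) η τ * deltaM τ ξ = deltaM η ξ := by
    simp [deltaM, Finset.sum_ite_eq', mul_comm]
  have h2 : ∑ τ, (fMat lam a b η τ + gMat lam a b η τ) * deltaM τ ξ
      = fMat lam a b η ξ + gMat lam a b η ξ := by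
    have : ∀ τ, (fMat lam a b η τ + gMat lam a b η τ) * deltaM τ ξ
        = if τ = ξ then fMat lam a b η τ + gMat lam a b η τ else 0 := by
      intro τ; by_cases h : τ = ξ <;> simp [deltaM, h]
    rw [Finset.sum_congr rfl fun τ _ => this τ]; simp [Finset.sum_ite_eq']
  have h3 : ∑ τ, deltaM (R := R) η τ * (fMat lam a b τ ξ + gMat lam a b τ ξ)
      = fMat lam a b η ξ + gMat lam a b η ξ := by
    have : ∀ τ, deltaM (R := R) η τ * (fMat lam a b τ ξ + gMat lam a b τ ξ)
        = if η = τ then fMat lam a b τ ξ + gMat lam a b τ ξ else 0 := by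
      intro τ; by_cases h : η = τ <;> simp [deltaM, h]
    rw [Finset.sum_congr rfl fun τ _ => this τ]; simp [Finset.sum_ite_eq]
  rw [h1, h2, h3]; ring

end MatId
section MatId2
variable {R S : Type*} [CommRing R] [Fintype S] [DecidableEq S]
variable (lam : S → S → R) (a b : S)

lemma PhiM_aa : PhiM lam a b a a = 1 := by simp [PhiM, deltaM, fMat, gMat]

lemma PhiM_a_ne (haa : lam a a = 0) {ξ : S} (hξ : ξ ≠ a) :
    PhiM lam a b a ξ = Ring.inverse (lam b a) * lam b ξ := by
  simp [PhiM, deltaM, fMat, gMat, hξ, Ne.symm hξ, haa]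

lemma PhiM_b_row (hne : a ≠ b) (ξ : S) : PhiM lam a b b ξ = deltaM b ξ := by
  simp [PhiM, fMat, gMat, Ne.symm hne]

lemma PhiM_ne_ne {η : S} (hηa : η ≠ a) (hηb : η ≠ b) (ξ : S) :
    PhiM lam a b η ξ = deltaM η ξ
      + (if ξ = b then -(lam η a * Ring.inverse (lam b a)) else 0) := by
  simp [PhiM, fMat, gMat, hηa, hηb]

lemma kppM_a_row (hne : a ≠ b) (ξ : S) : kppM lam a b a ξ = 0 := by
  simp [kppM, hne]

lemma kppM_b_row (hne : a ≠ b) (ξ : S) :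
    kppM lam a b b ξ = if ξ = a then lam b a else 0 := by
  by_cases h : ξ = a <;> simp [kppM, h, hne, Ne.symm hne]

lemma kppM_ne_ne {η : S} (hηa : η ≠ a) (hηb : η ≠ b) (ξ : S) :
    kppM lam a b η ξ = if ξ = a ∨ ξ = b then 0
      else lam η ξ - lam η a * Ring.inverse (lam b a) * lam b ξ := by
  by_cases h1 : ξ = a <;> by_cases h2 : ξ = b <;> simp [kppM, hηa, hηb, h1, h2]

lemma chainMapId (hu : IsUnit (lam b a)) (hne : a ≠ b)
    (haa : lam a a = 0) (hbb : lam b b = 0)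
    (hdsq : ∀ η ξ, ∑ τ, lam η τ * lam τ ξ = 0) :
    matMul (PhiM lam a b) lam = matMul (kppM lam a b) (PhiM lam a b) := by
  set v := Ring.inverse (lam b a) with hv
  have hvu : v * lam b a = 1 := Ring.inverse_mul_cancel _ hu
  have huv : lam b a * v = 1 := Ring.mul_inverse_cancel _ hu
  funext η ξ
  show (∑ τ, PhiM lam a b η τ * lam τ ξ) = ∑ τ, kppM lam a b η τ * PhiM lam a b τ ξ
  by_cases hηa : η = a
  · rw [hηa]
    have hL : ∀ τ, PhiM lam a b a τ * lam τ ξ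
        = (if τ = a then (lam a ξ - v * (lam b a * lam a ξ)) else 0)
          + v * (lam b τ * lam τ ξ) := by
      intro τ
      by_cases h : τ = a
      · rw [h, PhiM_aa, if_pos rfl]; ring
      · rw [PhiM_a_ne lam a b haa h, if_neg h, ← hv]; ring
    rw [Finset.sum_congr rfl fun τ _ => hL τ]
    rw [Finset.sum_add_distrib, ← Finset.mul_sum, hdsq b ξ, mul_zero, add_zero]
    rw [Finset.sum_ite_eq' Finset.univ a]
    simp only [Finset.mem_univ, if_true]
    have h1 : v * (lam b a * lam a ξ) = (v * lam b a) * lam a ξ := by ring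
    rw [h1, hvu, one_mul, sub_self]
    symm
    exact Finset.sum_eq_zero fun τ _ => by rw [kppM_a_row lam a b hne, zero_mul]
  · by_cases hηb : η = b
    · rw [hηb]
      have hL : ∀ τ, PhiM lam a b b τ * lam τ ξ = (if τ = b then lam b ξ else 0) := by
        intro τ
        rw [PhiM_b_row lam a b hne]
        by_cases h : τ = b
        · rw [h]; simp [deltaM]
        · simp [deltaM, Ne.symm h, h]
      have hR : ∀ τ, kppM lam a b b τ * PhiM lam a b τ ξ
          = (if τ = a then lam b a * PhiM lam a b a ξ else 0) := by
        intro τ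
        rw [kppM_b_row lam a b hne]
        by_cases h : τ = a
        · rw [if_pos h, if_pos h, h]
        · rw [if_neg h, if_neg h, zero_mul]
      rw [Finset.sum_congr rfl fun τ _ => hL τ, Finset.sum_congr rfl fun τ _ => hR τ,
        Finset.sum_ite_eq' Finset.univ b, Finset.sum_ite_eq' Finset.univ a]
      simp only [Finset.mem_univ, if_true]
      by_cases hξa : ξ = a
      · rw [hξa, PhiM_aa, mul_one]
      · rw [PhiM_a_ne lam a b haa hξa, ← hv, ← mul_assoc, huv, one_mul]
    · -- η ∉ {a, b}
      have hL : ∀ τ, PhiM lam a b η τ * lam τ ξ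
          = (if τ = η then lam η ξ else 0)
            + (if τ = b then -(lam η a * v) * lam b ξ else 0) := by
        intro τ
        rw [PhiM_ne_ne lam a b hηa hηb, ← hv]
        by_cases h : τ = η <;> by_cases h2 : τ = b
        · exact absurd (h.symm.trans h2) hηb
        · rw [if_neg h2, if_pos h, if_neg h2, add_zero, add_zero, h]
          simp [deltaM]
        · rw [if_pos h2, if_neg h, if_pos h2, h2]
          simp [deltaM, hηb]
        · rw [if_neg h2, if_neg h, if_neg h2, add_zero, add_zero]
          simp [deltaM, Ne.symm h]
      rw [Finset.sum_congr rfl fun τ _ => hL τ, Finset.sum_add_distrib,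
        Finset.sum_ite_eq' Finset.univ η, Finset.sum_ite_eq' Finset.univ b]
      simp only [Finset.mem_univ, if_true]
      by_cases hξb : ξ = b
      · rw [hξb]
        have hR : ∀ τ, kppM lam a b η τ * PhiM lam a b τ b
            = (if τ = a ∨ τ = b then 0 else
                (lam η τ - lam η a * v * lam b τ) * (-(lam τ a * v))) := by
          intro τ
          rw [kppM_ne_ne lam a b hηa hηb, ← hv]
          by_cases hor : τ = a ∨ τ = b
          · rw [if_pos hor, if_pos hor, zero_mul]
          · push_neg at hor
            rw [if_neg (by tauto), if_neg (by tauto),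
              PhiM_ne_ne lam a b hor.1 hor.2, ← hv, if_pos rfl]
            have : deltaM (R := R) τ b = 0 := by simp [deltaM, hor.2]
            rw [this, zero_add]
        rw [Finset.sum_congr rfl fun τ _ => hR τ, sum_erase_pair hne]
        have hsum : ∑ τ, (lam η τ - lam η a * v * lam b τ) * (-(lam τ a * v)) = 0 := by
          have hterm : ∀ τ, (lam η τ - lam η a * v * lam b τ) * (-(lam τ a * v))
              = (-v) * (lam η τ * lam τ a) + (lam η a * v * v) * (lam b τ * lam τ a) := by
            intro τ; ring
          rw [Finset.sum_congr rfl fun τ _ => hterm τ, Finset.sum_add_distrib,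
            ← Finset.mul_sum, ← Finset.mul_sum, hdsq η a, hdsq b a, mul_zero, mul_zero,
            add_zero]
        rw [hsum]
        have h2 : (lam η a - lam η a * v * lam b a) * (-(lam a a * v)) = 0 := by
          rw [haa]; ring
        have h3 : (lam η b - lam η a * v * lam b b) * (-(lam b a * v)) = -lam η b := by
          rw [hbb, huv]; ring
        rw [h2, h3, hbb]; ring
      · have hR : ∀ τ, kppM lam a b η τ * PhiM lam a b τ ξ
            = (if τ = a ∨ τ = b then 0 else
                (if τ = ξ then lam η ξ - lam η a * v * lam b ξ else 0)) := by
          intro τ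
          rw [kppM_ne_ne lam a b hηa hηb, ← hv]
          by_cases hor : τ = a ∨ τ = b
          · rw [if_pos hor, if_pos hor, zero_mul]
          · push_neg at hor
            rw [if_neg (by tauto), if_neg (by tauto),
              PhiM_ne_ne lam a b hor.1 hor.2, ← hv, if_neg hξb, add_zero]
            by_cases h : τ = ξ
            · rw [if_pos h, h]
              simp [deltaM]
            · rw [if_neg h]
              have : deltaM (R := R) τ ξ = 0 := by simp [deltaM, h]
              rw [this, mul_zero]
        rw [Finset.sum_congr rfl fun τ _ => hR τ, sum_erase_pair hne,
          Finset.sum_ite_eq' Finset.univ ξ]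
        simp only [Finset.mem_univ, if_true]
        by_cases hξa : ξ = a
        · have hz : lam η ξ - lam η a * v * lam b ξ = 0 := by
            rw [hξa]
            calc lam η a - lam η a * v * lam b a
                = lam η a - lam η a * (v * lam b a) := by ring
              _ = 0 := by rw [hvu, mul_one, sub_self]
          rw [hz]
          simp only [ite_self, sub_zero, zero_sub, neg_zero]
          linear_combination hz
        · rw [if_neg (Ne.symm hξa), if_neg (Ne.symm hξb)]
          ring

end MatId2
section MatId3
variable {R S : Type*} [CommRing R] [Fintype S] [DecidableEq S]
variable (lam : S → S → R) (a b : S)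

lemma kpp_pi (hne : a ≠ b) :
    matMul (kppM lam a b) (piMat a b) = muMat lam a b := by
  funext η ξ
  show (∑ τ, kppM lam a b η τ * piMat a b τ ξ) = muMat lam a b η ξ
  have hterm : ∀ τ, kppM lam a b η τ * piMat a b τ ξ
      = if τ = ξ then (if ¬ ξ = a ∧ ¬ ξ = b then kppM lam a b η ξ else 0) else 0 := by
    intro τ
    by_cases h : τ = ξ
    · rw [if_pos h, h]
      by_cases h2a : ξ = a
      · simp [piMat, h2a]
      · by_cases h2b : ξ = b <;> simp [piMat, h2a, h2b]
    · rw [if_neg h]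
      simp [piMat, h]
  rw [Finset.sum_congr rfl fun τ _ => hterm τ, Finset.sum_ite_eq' Finset.univ ξ]
  simp only [Finset.mem_univ, if_true]
  by_cases hξa : ξ = a
  · simp [muMat, hξa]
  · by_cases hξb : ξ = b
    · simp [muMat, hξb, hξa]
    · rw [if_pos ⟨hξa, hξb⟩]
      by_cases hηa : η = a
      · rw [hηa, kppM_a_row lam a b hne]
        simp [muMat]
      · by_cases hηb : η = b
        · rw [hηb, kppM_b_row lam a b hne, if_neg hξa]
          simp [muMat]
        · rw [kppM_ne_ne lam a b hηa hηb]
          simp [muMat, hξa, hξb, hηa, hηb]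

lemma pi_mu :
    matMul (piMat a b) (muMat lam a b) = muMat lam a b := by
  funext η ξ
  show (∑ τ, piMat a b η τ * muMat lam a b τ ξ) = muMat lam a b η ξ
  have hterm : ∀ τ, piMat a b η τ * muMat lam a b τ ξ
      = if τ = η then (if ¬ η = a ∧ ¬ η = b then muMat lam a b η ξ else 0) else 0 := by
    intro τ
    by_cases h : τ = η
    · rw [if_pos h, h]
      by_cases h2a : η = a
      · simp [piMat, h2a]
      · by_cases h2b : η = b <;> simp [piMat, h2a, h2b]
    · rw [if_neg h]
      simp [piMat, Ne.symm h]
  rw [Finset.sum_congr rfl fun τ _ => hterm τ, Finset.sum_ite_eq' Finset.univ η]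
  simp only [Finset.mem_univ, if_true]
  by_cases hηa : η = a
  · simp [muMat, hηa]
  · by_cases hηb : η = b
    · simp [muMat, hηb, hηa]
    · rw [if_pos ⟨hηa, hηb⟩]

lemma phiI_kpp (hu : IsUnit (lam b a)) (hne : a ≠ b)
    (haa : lam a a = 0) (hbb : lam b b = 0)
    (hdsq : ∀ η ξ, ∑ τ, lam η τ * lam τ ξ = 0) :
    matMul (PhiI lam a b) (kppM lam a b) = matMul lam (PhiI lam a b) := by
  calc matMul (PhiI lam a b) (kppM lam a b)
      = matMul (PhiI lam a b) (matMul (kppM lam a b) deltaM) := by rw [matMul_deltaM]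
    _ = matMul (PhiI lam a b)
        (matMul (kppM lam a b) (matMul (PhiM lam a b) (PhiI lam a b))) := by
        rw [PhiM_PhiI lam a b hu hne haa hbb hdsq]
    _ = matMul (PhiI lam a b)
        (matMul (matMul (kppM lam a b) (PhiM lam a b)) (PhiI lam a b)) := by
        simp only [matMul_assoc]
    _ = matMul (PhiI lam a b)
        (matMul (matMul (PhiM lam a b) lam) (PhiI lam a b)) := by
        rw [chainMapId lam a b hu hne haa hbb hdsq]
    _ = matMul (matMul (PhiI lam a b) (matMul (PhiM lam a b) lam)) (PhiI lam a b) := by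
        simp only [matMul_assoc]
    _ = matMul (matMul (matMul (PhiI lam a b) (PhiM lam a b)) lam) (PhiI lam a b) := by
        simp only [matMul_assoc]
    _ = matMul (matMul deltaM lam) (PhiI lam a b) := by
        rw [PhiI_PhiM lam a b hu hne haa hbb hdsq]
    _ = matMul lam (PhiI lam a b) := by rw [deltaM_matMul]

lemma proj_chain (hu : IsUnit (lam b a)) (hne : a ≠ b)
    (haa : lam a a = 0) (hbb : lam b b = 0)
    (hdsq : ∀ η ξ, ∑ τ, lam η τ * lam τ ξ = 0) :
    matMul (matMul (PhiI lam a b) (piMat a b)) (muMat lam a b)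
      = matMul lam (matMul (PhiI lam a b) (piMat a b)) := by
  calc matMul (matMul (PhiI lam a b) (piMat a b)) (muMat lam a b)
      = matMul (PhiI lam a b) (matMul (piMat a b) (muMat lam a b)) := by simp only [matMul_assoc]
    _ = matMul (PhiI lam a b) (muMat lam a b) := by rw [pi_mu]
    _ = matMul (PhiI lam a b) (matMul (kppM lam a b) (piMat a b)) := by rw [kpp_pi lam a b hne]
    _ = matMul (matMul (PhiI lam a b) (kppM lam a b)) (piMat a b) := by simp only [matMul_assoc]
    _ = matMul (matMul lam (PhiI lam a b)) (piMat a b) := by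
        rw [phiI_kpp lam a b hu hne haa hbb hdsq]
    _ = matMul lam (matMul (PhiI lam a b) (piMat a b)) := by simp only [matMul_assoc]

end MatId3
section StepThm
variable {R S : Type*} [CommRing R] [Fintype S] [DecidableEq S]
variable (lam : S → S → R) (a b : S)

lemma kppM_col_a (η : S) : kppM lam a b η a = if η = b then lam b a else 0 := by
  by_cases h : η = b <;> simp [kppM, h]

lemma kpp_eq_mu_row {η : S} (hηa : η ≠ a) (hηb : η ≠ b) :
    kppM lam a b η = muMat lam a b η := by
  funext ξ
  rw [kppM_ne_ne lam a b hηa hηb]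
  by_cases h1 : ξ = a <;> by_cases h2 : ξ = b <;> simp [muMat, hηa, hηb, h1, h2]

lemma PhiM_a_eq (hu : IsUnit (lam b a)) (haa : lam a a = 0) (ξ : S) :
    PhiM lam a b a ξ = Ring.inverse (lam b a) * lam b ξ := by
  by_cases h : ξ = a
  · rw [h, PhiM_aa, Ring.inverse_mul_cancel _ hu]
  · exact PhiM_a_ne lam a b haa h

lemma suppPhiM {T : Set S} (h1 : ∀ η ∈ T, lam η a ≠ 0 → b ∈ T)
    (h2 : a ∈ T → ∀ ξ, ξ ≠ a → lam b ξ ≠ 0 → ξ ∈ T) :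
    ∀ η ∈ T, ∀ ξ, PhiM lam a b η ξ ≠ 0 → ξ ∈ T := by
  intro η hη ξ h0
  by_cases hd : η = ξ
  · exact hd ▸ hη
  have hfg : fMat lam a b η ξ ≠ 0 ∨ gMat lam a b η ξ ≠ 0 := by
    by_contra hc
    push_neg at hc
    exact h0 (by simp [PhiM, deltaM, hd, hc.1, hc.2])
  rcases hfg with hf | hg
  · have hcond : ξ = b ∧ ¬ η = b := by
      by_contra hcc
      exact hf (by simp [fMat, hcc])
    have hla : lam η a ≠ 0 := by
      intro h
      exact hf (by simp [fMat, h])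
    exact hcond.1 ▸ h1 η hη hla
  · have hcond : η = a ∧ ¬ ξ = a := by
      by_contra hcc
      exact hg (by simp [gMat, hcc])
    have hlb : lam b ξ ≠ 0 := by
      intro h
      exact hg (by simp [gMat, h])
    exact h2 (hcond.1 ▸ hη) ξ hcond.2 hlb

lemma suppPhiI {T : Set S} (h1 : ∀ η ∈ T, lam η a ≠ 0 → b ∈ T)
    (h2 : a ∈ T → ∀ ξ, ξ ≠ a → lam b ξ ≠ 0 → ξ ∈ T) :
    ∀ η ∈ T, ∀ ξ, PhiI lam a b η ξ ≠ 0 → ξ ∈ T := by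
  intro η hη ξ h0
  by_cases hd : η = ξ
  · exact hd ▸ hη
  have hfg : fMat lam a b η ξ ≠ 0 ∨ gMat lam a b η ξ ≠ 0 := by
    by_contra hc
    push_neg at hc
    exact h0 (by simp [PhiI, deltaM, hd, hc.1, hc.2])
  rcases hfg with hf | hg
  · have hcond : ξ = b ∧ ¬ η = b := by
      by_contra hcc
      exact hf (by simp [fMat, hcc])
    have hla : lam η a ≠ 0 := by
      intro h
      exact hf (by simp [fMat, h])
    exact hcond.1 ▸ h1 η hη hla
  · have hcond : η = a ∧ ¬ ξ = a := by
      by_contra hcc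
      exact hg (by simp [gMat, hcc])
    have hlb : lam b ξ ≠ 0 := by
      intro h
      exact hg (by simp [gMat, h])
    exact h2 (hcond.1 ▸ hη) ξ hcond.2 hlb

lemma suppPi {T : Set S} :
    ∀ η ∈ T, ∀ ξ, piMat (R := R) a b η ξ ≠ 0 → ξ ∈ T \ {a, b} := by
  intro η hη ξ h0
  have hcond : η = ξ ∧ ¬ η = a ∧ ¬ η = b := by
    by_contra hcc
    exact h0 (by simp [piMat, hcc])
  obtain ⟨h, hA, hB⟩ := hcond
  exact ⟨h ▸ hη, by simp [← h, hA, hB]⟩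

lemma bdryL_pi_coeff (y : S →₀ R) (ξ : S) :
    bdryL (piMat a b) y ξ = if ¬ ξ = a ∧ ¬ ξ = b then y ξ else 0 := by
  rw [bdryL_apply]
  have hterm : ∀ η, y η * piMat (R := R) a b η ξ
      = if η = ξ then (if ¬ ξ = a ∧ ¬ ξ = b then y ξ else 0) else 0 := by
    intro η
    by_cases h : η = ξ
    · rw [if_pos h, h]
      by_cases h1 : ξ = a
      · simp [piMat, h1]
      · by_cases h2 : ξ = b <;> simp [piMat, h1, h2]
    · rw [if_neg h]
      simp [piMat, h]
  rw [Finset.sum_congr rfl fun η _ => hterm η, Finset.sum_ite_eq' Finset.univ ξ]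
  simp

lemma mem_supported_apply {T : Set S} {x : S →₀ R} (hx : x ∈ Finsupp.supported R R T)
    {η : S} (h : x η ≠ 0) : η ∈ T := by
  by_contra hn
  exact h ((Finsupp.mem_supported' R x).1 hx η hn)

end StepThm

section SingleLem
variable {R S : Type*} [CommRing R] [Fintype S] [DecidableEq S]
variable (lam : S → S → R) (a b : S)

lemma bdryL_phiM_single (hu : IsUnit (lam b a)) (haa : lam a a = 0) (c : R) :
    bdryL (PhiM lam a b) (Finsupp.single a c)
      = bdryL lam (Finsupp.single b (c * Ring.inverse (lam b a))) := by
  ext ξ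
  rw [bdryL_apply, bdryL_apply]
  have ht1 : ∀ η, Finsupp.single a c η * PhiM lam a b η ξ
      = if η = a then c * PhiM lam a b a ξ else 0 := by
    intro η
    by_cases h : η = a
    · rw [if_pos h, h, Finsupp.single_apply, if_pos rfl]
    · rw [if_neg h, Finsupp.single_apply, if_neg (Ne.symm h), zero_mul]
  have ht2 : ∀ η, Finsupp.single b (c * Ring.inverse (lam b a)) η * lam η ξ
      = if η = b then (c * Ring.inverse (lam b a)) * lam b ξ else 0 := by
    intro η
    by_cases h : η = b
    · rw [if_pos h, h, Finsupp.single_apply, if_pos rfl]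
    · rw [if_neg h, Finsupp.single_apply, if_neg (Ne.symm h), zero_mul]
  rw [Finset.sum_congr rfl fun η _ => ht1 η, Finset.sum_congr rfl fun η _ => ht2 η,
    Finset.sum_ite_eq' Finset.univ a, Finset.sum_ite_eq' Finset.univ b]
  simp only [Finset.mem_univ, if_true]
  rw [PhiM_a_eq lam a b hu haa]
  ring

end SingleLem
section StepMain
variable {R S : Type*} [CommRing R] [Fintype S] [DecidableEq S]

theorem stepEquiv (lam : S → S → R) (a b : S) (hu : IsUnit (lam b a)) (hne : a ≠ b)
    (haa : lam a a = 0) (hbb : lam b b = 0)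
    (hdsq : ∀ η ξ, ∑ τ, lam η τ * lam τ ξ = 0)
    (Tz Tb : Set S)
    (hz1 : ∀ η ∈ Tz, lam η a ≠ 0 → b ∈ Tz)
    (hz2 : a ∈ Tz → ∀ ξ, ξ ≠ a → lam b ξ ≠ 0 → ξ ∈ Tz)
    (hb1 : ∀ η ∈ Tb, lam η a ≠ 0 → b ∈ Tb)
    (hb2 : a ∈ Tb → ∀ ξ, ξ ≠ a → lam b ξ ≠ 0 → ξ ∈ Tb)
    (hab : a ∈ Tz → b ∈ Tb) :
    Nonempty (persHom lam Tz Tb ≃ₗ[R]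
      persHom (muMat lam a b) (Tz \ {a, b}) (Tb \ {a, b})) := by
  set v := Ring.inverse (lam b a) with hv
  have hvu : v * lam b a = 1 := Ring.inverse_mul_cancel _ hu
  -- the two chain maps
  set P : (S →₀ R) →ₗ[R] (S →₀ R) :=
    (bdryL (piMat a b)).comp (bdryL (PhiI lam a b)) with hP
  set J : (S →₀ R) →ₗ[R] (S →₀ R) := bdryL (PhiM lam a b) with hJ
  have hPapp : ∀ x, P x = bdryL (piMat a b) (bdryL (PhiI lam a b) x) := fun x => rfl
  -- support preservation
  have hPsuppz : ∀ x ∈ Finsupp.supported R R Tz,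
      P x ∈ Finsupp.supported R R (Tz \ {a, b}) := by
    intro x hx
    rw [hPapp]
    exact bdryL_supported (suppPi a b) (bdryL_supported (suppPhiI lam a b hz1 hz2) hx)
  have hPsuppb : ∀ x ∈ Finsupp.supported R R Tb,
      P x ∈ Finsupp.supported R R (Tb \ {a, b}) := by
    intro x hx
    rw [hPapp]
    exact bdryL_supported (suppPi a b) (bdryL_supported (suppPhiI lam a b hb1 hb2) hx)
  have hsubz : Tz \ {a, b} ⊆ Tz := Set.diff_subset
  have hsubb : Tb \ {a, b} ⊆ Tb := Set.diff_subset
  have hJsuppz : ∀ y ∈ Finsupp.supported R R (Tz \ {a, b}),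
      J y ∈ Finsupp.supported R R Tz := by
    intro y hy
    exact bdryL_supported (suppPhiM lam a b hz1 hz2)
      (Finsupp.supported_mono hsubz hy)
  have hJsuppb : ∀ y ∈ Finsupp.supported R R (Tb \ {a, b}),
      J y ∈ Finsupp.supported R R Tb := by
    intro y hy
    exact bdryL_supported (suppPhiM lam a b hb1 hb2)
      (Finsupp.supported_mono hsubb hy)
  -- kpp agrees with mu on chains avoiding a, b
  have hkppmu : ∀ y ∈ Finsupp.supported R R (Set.univ \ ({a, b} : Set S)),
      bdryL (kppM lam a b) y = bdryL (muMat lam a b) y := by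
    intro y hy
    refine bdryL_congr_of_support fun η h0 => ?_
    have hη := mem_supported_apply hy h0
    have hηa : η ≠ a := by
      intro h; exact hη.2 (by simp [h])
    have hηb : η ≠ b := by
      intro h; exact hη.2 (by simp [h])
    exact kpp_eq_mu_row lam a b hηa hηb
  have hsupuz : ∀ y : S →₀ R, y ∈ Finsupp.supported R R (Tz \ {a, b}) →
      y ∈ Finsupp.supported R R (Set.univ \ ({a, b} : Set S)) :=
    fun y hy =>
      Finsupp.supported_mono (Set.diff_subset_diff_left (Set.subset_univ Tz)) hy
  have hsupub : ∀ y : S →₀ R, y ∈ Finsupp.supported R R (Tb \ {a, b}) →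
      y ∈ Finsupp.supported R R (Set.univ \ ({a, b} : Set S)) :=
    fun y hy =>
      Finsupp.supported_mono (Set.diff_subset_diff_left (Set.subset_univ Tb)) hy
  -- the four comap conditions
  have hfc : cyclesIn lam Tz ≤ (cyclesIn (muMat lam a b) (Tz \ {a, b})).comap P := by
    intro x hx
    rw [cyclesIn, Submodule.mem_inf] at hx
    obtain ⟨hs, hk⟩ := hx
    rw [LinearMap.mem_ker] at hk
    rw [Submodule.mem_comap, cyclesIn, Submodule.mem_inf]
    refine ⟨hPsuppz x hs, ?_⟩
    rw [LinearMap.mem_ker, hPapp, bdryL_comp, bdryL_comp, ← matMul_assoc,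
      proj_chain lam a b hu hne haa hbb hdsq, ← bdryL_comp, hk, map_zero]
  have hfb : bdriesIn lam Tb ≤ (bdriesIn (muMat lam a b) (Tb \ {a, b})).comap P := by
    rintro x ⟨c, hc, rfl⟩
    rw [Submodule.mem_comap]
    refine ⟨bdryL (piMat a b) (bdryL (PhiI lam a b) c), ?_, ?_⟩
    · exact bdryL_supported (suppPi a b) (bdryL_supported (suppPhiI lam a b hb1 hb2) hc)
    · have hL : bdryL (muMat lam a b) (bdryL (piMat a b) (bdryL (PhiI lam a b) c))
          = bdryL (matMul (PhiI lam a b) (matMul (piMat a b) (muMat lam a b))) c := by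
        rw [bdryL_comp, bdryL_comp]
      have hR : P (bdryL lam c)
          = bdryL (matMul lam (matMul (PhiI lam a b) (piMat a b))) c := by
        rw [hPapp, bdryL_comp, bdryL_comp]
      rw [hL, hR, ← matMul_assoc, proj_chain lam a b hu hne haa hbb hdsq]
  have hgc : cyclesIn (muMat lam a b) (Tz \ {a, b}) ≤ (cyclesIn lam Tz).comap J := by
    intro y hy
    rw [cyclesIn, Submodule.mem_inf] at hy
    obtain ⟨hs, hk⟩ := hy
    rw [LinearMap.mem_ker] at hk
    rw [Submodule.mem_comap, cyclesIn, Submodule.mem_inf]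
    refine ⟨hJsuppz y hs, ?_⟩
    rw [LinearMap.mem_ker, hJ, bdryL_comp, chainMapId lam a b hu hne haa hbb hdsq,
      ← bdryL_comp, hkppmu y (hsupuz y hs), hk, map_zero]
  have hgb : bdriesIn (muMat lam a b) (Tb \ {a, b}) ≤ (bdriesIn lam Tb).comap J := by
    rintro y ⟨d, hd, rfl⟩
    rw [Submodule.mem_comap]
    refine ⟨bdryL (PhiM lam a b) d, ?_, ?_⟩
    · exact bdryL_supported (suppPhiM lam a b hb1 hb2) (Finsupp.supported_mono hsubb hd)
    · have hL : bdryL lam (bdryL (PhiM lam a b) d)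
          = bdryL (PhiM lam a b) (bdryL (kppM lam a b) d) := by
        rw [bdryL_comp, chainMapId lam a b hu hne haa hbb hdsq, ← bdryL_comp]
      rw [hJ, hL, hkppmu d (hsupub d hd)]
  -- composites
  have hfg : ∀ y ∈ cyclesIn (muMat lam a b) (Tz \ {a, b}),
      P (J y) - y ∈ bdriesIn (muMat lam a b) (Tb \ {a, b}) := by
    intro y hy
    rw [cyclesIn, Submodule.mem_inf] at hy
    obtain ⟨hs, _⟩ := hy
    have h1 : bdryL (PhiI lam a b) (bdryL (PhiM lam a b) y) = y := by
      rw [bdryL_comp, PhiM_PhiI lam a b hu hne haa hbb hdsq, bdryL_deltaM]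
    have h2 : bdryL (piMat a b) y = y := by
      ext ξ
      rw [bdryL_pi_coeff]
      by_cases h1' : ξ = a
      · rw [if_neg (by simp [h1'])]
        by_contra h
        exact (mem_supported_apply hs fun hc => h hc.symm).2 (by simp [h1'])
      · by_cases h2' : ξ = b
        · rw [if_neg (by simp [h2'])]
          by_contra h
          exact (mem_supported_apply hs fun hc => h hc.symm).2 (by simp [h2'])
        · rw [if_pos ⟨h1', h2'⟩]
    have : P (J y) = y := by
      rw [hJ, hPapp, h1, h2]
    rw [this, sub_self]
    exact Submodule.zero_mem _
  have hgf : ∀ x ∈ cyclesIn lam Tz, J (P x) - x ∈ bdriesIn lam Tb := by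
    intro x hx
    rw [cyclesIn, Submodule.mem_inf] at hx
    obtain ⟨hs, hk⟩ := hx
    rw [LinearMap.mem_ker] at hk
    set y := bdryL (PhiI lam a b) x with hy
    have hy_supp : y ∈ Finsupp.supported R R Tz :=
      bdryL_supported (suppPhiI lam a b hz1 hz2) hs
    have hkppy : bdryL (kppM lam a b) y = 0 := by
      rw [hy, bdryL_comp, phiI_kpp lam a b hu hne haa hbb hdsq, ← bdryL_comp, hk, map_zero]
    have hyb : y b = 0 := by
      have hcoeff : bdryL (kppM lam a b) y a = y b * lam b a := by
        rw [bdryL_apply]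
        have hterm : ∀ η, y η * kppM lam a b η a
            = if η = b then y b * lam b a else 0 := by
          intro η
          rw [kppM_col_a]
          by_cases h : η = b
          · rw [if_pos h, if_pos h, h]
          · rw [if_neg h, if_neg h, mul_zero]
        rw [Finset.sum_congr rfl fun η _ => hterm η, Finset.sum_ite_eq' Finset.univ b]
        simp
      have h0 : y b * lam b a = 0 := by rw [← hcoeff, hkppy]; rfl
      calc y b = y b * (lam b a * v) := by rw [mul_comm (lam b a) v, hvu, mul_one]
        _ = (y b * lam b a) * v := by ring
        _ = 0 := by rw [h0, zero_mul]
    have hxeq : x = bdryL (PhiM lam a b) y := by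
      rw [hy, bdryL_comp, PhiI_PhiM lam a b hu hne haa hbb hdsq, bdryL_deltaM]
    have hdiff : y - bdryL (piMat a b) y = Finsupp.single a (y a) := by
      ext ξ
      rw [Finsupp.sub_apply, bdryL_pi_coeff]
      by_cases h1' : ξ = a
      · rw [if_neg (by simp [h1']), h1']
        simp
      · by_cases h2' : ξ = b
        · rw [if_neg (by simp [h2']), h2']
          simp [hyb, Finsupp.single_apply, hne]
        · rw [if_pos ⟨h1', h2'⟩]
          simp [Finsupp.single_apply, Ne.symm h1']
    have hsingle : bdryL (PhiM lam a b) (Finsupp.single a (y a))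
        = bdryL lam (Finsupp.single b (y a * v)) := by
      rw [hv]; exact bdryL_phiM_single lam a b hu haa (y a)
    have hfinal : J (P x) - x = bdryL lam (-(Finsupp.single b (y a * v))) := by
      have : x - J (P x) = bdryL lam (Finsupp.single b (y a * v)) := by
        calc x - J (P x) = bdryL (PhiM lam a b) y - bdryL (PhiM lam a b) (bdryL (piMat a b) y) := by
              rw [← hxeq, hJ, hPapp, ← hy]
          _ = bdryL (PhiM lam a b) (y - bdryL (piMat a b) y) := by rw [map_sub]
          _ = bdryL (PhiM lam a b) (Finsupp.single a (y a)) := by rw [hdiff]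
          _ = bdryL lam (Finsupp.single b (y a * v)) := hsingle
      rw [map_neg, ← this, neg_sub]
    rw [hfinal]
    by_cases hya : y a = 0
    · refine ⟨0, Submodule.zero_mem _, ?_⟩
      rw [hya, zero_mul, Finsupp.single_zero, neg_zero, map_zero]
    · have haz : a ∈ Tz := mem_supported_apply hy_supp hya
      have hbT : b ∈ Tb := hab haz
      exact ⟨-(Finsupp.single b (y a * v)),
        Submodule.neg_mem _ (Finsupp.single_mem_supported R _ hbT), rfl⟩
  exact ⟨persEquiv lam (muMat lam a b) Tz Tb (Tz \ {a, b}) (Tb \ {a, b}) P J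
    hfb hfc hgb hgc hgf hfg⟩

end StepMain
section RedInv
variable {R S : Type*} [CommRing R] [Fintype S] [DecidableEq S]

/-- the face relation between elements of `A` used for acyclicity -/
def matchRel {X : SComplex R S} (M : PartialMatching X) : S → S → Prop :=
  fun τ σ => τ ∈ M.A ∧ σ ∈ M.A ∧ σ ≠ τ ∧ X.κ (M.m τ) σ ≠ 0

lemma transGen_chain {r : S → S → Prop} {x y : S} (h : Relation.TransGen r x y) :
    ∃ (p : ℕ) (σ : ℕ → S), σ 0 = x ∧ σ (p + 1) = y ∧ ∀ i ≤ p, r (σ i) (σ (i + 1)) := by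
  induction h with
  | single hxy =>
    rename_i z
    refine ⟨0, fun i => if i = 0 then x else z, by simp, by simp, ?_⟩
    intro i hi
    interval_cases i
    simpa using hxy
  | tail _ hyz ih =>
    rename_i y' z _
    obtain ⟨p, σ, h0, hp, hstep⟩ := ih
    refine ⟨p + 1, fun i => if i ≤ p + 1 then σ i else z, by simp [h0], by simp, ?_⟩
    intro i hi
    by_cases hip : i ≤ p
    · have h1 : i ≤ p + 1 := by omega
      have h2 : i + 1 ≤ p + 1 := by omega
      simpa [h1, h2] using hstep i hip
    · have hieq : i = p + 1 := by omega
      have h1 : i ≤ p + 1 := by omega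
      have h2 : ¬ (i + 1 ≤ p + 1) := by omega
      simp only [h1, h2, if_true, if_false]
      rw [hieq, hp]
      exact hyz

lemma acyclic_no_loop {X : SComplex R S} {M : PartialMatching X} (hac : M.Acyclic)
    (x : S) : ¬ Relation.TransGen (matchRel M) x x := by
  intro h
  obtain ⟨p, σ, h0, hp, hstep⟩ := transGen_chain h
  exact hac ⟨p, σ, fun i hi => (hstep i hi).1, by rw [hp, h0],
    fun i hi => ⟨(hstep i hi).2.2.1, (hstep i hi).2.2.2⟩⟩

variable {k : ℕ}

/-- invariants maintained along the sequence of reductions -/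
structure RedInvt (X : SComplex R S) (M : PartialMatching X)
    (F : (Fin k → ℝ) → Set S) (κ : S → S → R) (l : List S) : Prop where
  dsq : ∀ η ξ, ∑ τ, κ η τ * κ τ ξ = 0
  dimr : ∀ η ξ, κ η ξ ≠ 0 → X.dim η = X.dim ξ + 1
  face : ∀ γ η ξ, η ∈ F γ → κ η ξ ≠ 0 → ξ ∈ F γ
  unitp : ∀ c ∈ l, IsUnit (κ (M.m c) c)
  path : ∀ τ ∈ M.A, ∀ σ ∈ M.A, σ ≠ τ → κ (M.m τ) σ ≠ 0 →
    Relation.TransGen (matchRel M) τ σ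
  deadA : ∀ c ∈ M.A, c ∉ l → ∀ η, κ η c = 0
  deadB : ∀ c ∈ M.A, c ∉ l → ∀ ξ, κ (M.m c) ξ = 0

lemma reduceOne_row_ma (κ : S → S → R) (m : S → S) (a : S)
    (hu : IsUnit (κ (m a) a)) (ξ : S) : reduceOne m a κ (m a) ξ = 0 := by
  show κ (m a) ξ - κ (m a) a * Ring.inverse (κ (m a) a) * κ (m a) ξ = 0
  rw [Ring.mul_inverse_cancel _ hu, one_mul, sub_self]

lemma reduceOne_col_a (κ : S → S → R) (m : S → S) (a : S)
    (hu : IsUnit (κ (m a) a)) (η : S) : reduceOne m a κ η a = 0 := by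
  show κ η a - κ η a * Ring.inverse (κ (m a) a) * κ (m a) a = 0
  rw [mul_assoc, Ring.inverse_mul_cancel _ hu, mul_one, sub_self]

lemma reduceOne_ne {κ : S → S → R} {m : S → S} {a η ξ : S}
    (h : reduceOne m a κ η ξ ≠ 0) :
    κ η ξ ≠ 0 ∨ (κ η a ≠ 0 ∧ κ (m a) ξ ≠ 0) := by
  by_contra hc
  push_neg at hc
  apply h
  show κ η ξ - κ η a * Ring.inverse (κ (m a) a) * κ (m a) ξ = 0
  by_cases h1 : κ η a = 0
  · rw [hc.1, h1, zero_mul, zero_mul, sub_zero]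
  · rw [hc.1, hc.2 h1, mul_zero, sub_zero]

lemma redInv_step {X : SComplex R S} {M : PartialMatching X} [Nontrivial R]
    {F : (Fin k → ℝ) → Set S} {κ : S → S → R} {a : S} {t : List S}
    (hac : M.Acyclic)
    (hcompat : ∀ γ : Fin k → ℝ, ∀ s ∈ M.A, s ∈ F γ → M.m s ∈ F γ)
    (hInv : RedInvt X M F κ (a :: t)) (haA : a ∈ M.A)
    (htA : ∀ c ∈ t, c ∈ M.A) (hat : a ∉ t) :
    RedInvt X M F (reduceOne M.m a κ) t := by
  have hu : IsUnit (κ (M.m a) a) := hInv.unitp a (List.mem_cons_self)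
  have hu0 : κ (M.m a) a ≠ 0 := hu.ne_zero
  have hdimba : X.dim (M.m a) = X.dim a + 1 := hInv.dimr _ _ hu0
  constructor
  · -- dsq
    intro η ξ
    have hterm : ∀ τ, reduceOne M.m a κ η τ * reduceOne M.m a κ τ ξ
        = κ η τ * κ τ ξ
          - (κ η τ * κ τ a) * (Ring.inverse (κ (M.m a) a) * κ (M.m a) ξ)
          - (κ η a * Ring.inverse (κ (M.m a) a)) * (κ (M.m a) τ * κ τ ξ)
          + ((κ η a * Ring.inverse (κ (M.m a) a))
              * (Ring.inverse (κ (M.m a) a) * κ (M.m a) ξ)) * (κ (M.m a) τ * κ τ a) := by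
      intro τ
      show (κ η τ - κ η a * Ring.inverse (κ (M.m a) a) * κ (M.m a) τ)
          * (κ τ ξ - κ τ a * Ring.inverse (κ (M.m a) a) * κ (M.m a) ξ) = _
      ring
    rw [Finset.sum_congr rfl fun τ _ => hterm τ]
    rw [Finset.sum_add_distrib, Finset.sum_sub_distrib, Finset.sum_sub_distrib]
    rw [← Finset.sum_mul, ← Finset.mul_sum, ← Finset.mul_sum]
    rw [hInv.dsq η ξ, hInv.dsq η a, hInv.dsq (M.m a) ξ, hInv.dsq (M.m a) a]
    simp
  · -- dim rule
    intro η ξ h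
    rcases reduceOne_ne h with h1 | ⟨h2, h3⟩
    · exact hInv.dimr η ξ h1
    · have d1 := hInv.dimr η a h2
      have d2 := hInv.dimr (M.m a) ξ h3
      omega
  · -- face
    intro γ η ξ hη h
    rcases reduceOne_ne h with h1 | ⟨h2, h3⟩
    · exact hInv.face γ η ξ hη h1
    · exact hInv.face γ (M.m a) ξ (hcompat γ a haA (hInv.face γ η a hη h2)) h3
  · -- units
    intro c hc
    have hcA : c ∈ M.A := htA c hc
    have hca : c ≠ a := fun h => hat (h ▸ hc)
    have hzero : κ (M.m c) a * Ring.inverse (κ (M.m a) a) * κ (M.m a) c = 0 := by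
      by_cases h1 : κ (M.m c) a = 0
      · rw [h1, zero_mul, zero_mul]
      · by_cases h2 : κ (M.m a) c = 0
        · rw [h2, mul_zero]
        · exfalso
          have p1 : Relation.TransGen (matchRel M) c a :=
            hInv.path c hcA a haA (Ne.symm hca) h1
          have p2 : Relation.TransGen (matchRel M) a c :=
            hInv.path a haA c hcA hca h2
          exact acyclic_no_loop hac c (p1.trans p2)
    have : reduceOne M.m a κ (M.m c) c = κ (M.m c) c := by
      show κ (M.m c) c - κ (M.m c) a * Ring.inverse (κ (M.m a) a) * κ (M.m a) c
          = κ (M.m c) c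
      rw [hzero, sub_zero]
    rw [this]
    exact hInv.unitp c (List.mem_cons_of_mem a hc)
  · -- path
    intro τ hτ σ hσ hστ h
    by_cases hτa : τ = a
    · exfalso
      rw [hτa] at h
      exact h (reduceOne_row_ma κ M.m a hu σ)
    · by_cases hσa : σ = a
      · exfalso
        rw [hσa] at h
        exact h (reduceOne_col_a κ M.m a hu (M.m τ))
      · rcases reduceOne_ne h with h1 | ⟨h2, h3⟩
        · exact hInv.path τ hτ σ hσ hστ h1
        · exact (hInv.path τ hτ a haA (fun hh => hτa hh.symm) h2).trans (hInv.path a haA σ hσ hσa h3)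
  · -- dead columns
    intro c hcA hcl η
    by_cases hca : c = a
    · rw [hca]
      exact reduceOne_col_a κ M.m a hu η
    · have hcl' : c ∉ a :: t := by
        intro h
        rcases List.mem_cons.1 h with h | h
        · exact hca h
        · exact hcl h
      show κ η c - κ η a * Ring.inverse (κ (M.m a) a) * κ (M.m a) c = 0
      rw [hInv.deadA c hcA hcl' η, hInv.deadA c hcA hcl' (M.m a), mul_zero, sub_zero]
  · -- dead rows
    intro c hcA hcl ξ
    by_cases hca : c = a
    · rw [hca]
      exact reduceOne_row_ma κ M.m a hu ξ
    · have hcl' : c ∉ a :: t := by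
        intro h
        rcases List.mem_cons.1 h with h | h
        · exact hca h
        · exact hcl h
      show κ (M.m c) ξ - κ (M.m c) a * Ring.inverse (κ (M.m a) a) * κ (M.m a) ξ = 0
      rw [hInv.deadB c hcA hcl' ξ, hInv.deadB c hcA hcl' a, zero_mul, zero_mul, sub_self]

end RedInv
section Main
variable {R S : Type*} [CommRing R] [Fintype S] [DecidableEq S] {k : ℕ}

/-- the set of elements forming the matched pairs indexed by the list `l` -/
def pairSet {X : SComplex R S} (M : PartialMatching X) (l : List S) : Set S :=
  {x | ∃ c ∈ l, x = c ∨ x = M.m c}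

lemma mainInd [Nontrivial R] (X : SComplex R S) (M : PartialMatching X)
    (hac : M.Acyclic) (F : (Fin k → ℝ) → Set S)
    (hmono : ∀ α β : Fin k → ℝ, α ≤ β → F α ⊆ F β)
    (hcompat : ∀ (γ : Fin k → ℝ), ∀ s ∈ M.A, s ∈ F γ → M.m s ∈ F γ)
    (α β : Fin k → ℝ) (hαβ : α ≤ β) (q : ℕ) :
    ∀ l : List S, l.Nodup → (∀ c ∈ l, c ∈ M.A) → ∀ κ : S → S → R, RedInvt X M F κ l →
      Nonempty (persHom (restrictKappa κ (M.C ∪ pairSet M l))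
          ((F α ∩ (M.C ∪ pairSet M l)) ∩ {σ | X.dim σ = q})
          ((F β ∩ (M.C ∪ pairSet M l)) ∩ {σ | X.dim σ = q + 1})
        ≃ₗ[R] persHom (restrictKappa (reduceList M.m l κ) M.C)
          ((F α ∩ M.C) ∩ {σ | X.dim σ = q})
          ((F β ∩ M.C) ∩ {σ | X.dim σ = q + 1})) := by
  intro l
  induction l with
  | nil =>
    intro _ _ κ _
    have hps : pairSet M ([] : List S) = (∅ : Set S) := by
      ext x; simp [pairSet]
    rw [hps, Set.union_empty, show reduceList M.m [] κ = κ from rfl]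
    exact ⟨LinearEquiv.refl _ _⟩
  | cons a t ih =>
    intro hnd hmem κ hInv
    have haA : a ∈ M.A := hmem a (List.mem_cons_self)
    have htA : ∀ c ∈ t, c ∈ M.A := fun c hc => hmem c (List.mem_cons_of_mem a hc)
    have hat : a ∉ t := (List.nodup_cons.1 hnd).1
    have hndt : t.Nodup := (List.nodup_cons.1 hnd).2
    have hbB : M.m a ∈ M.B := M.bij.mapsTo haA
    have hneab : a ≠ M.m a := by
      intro h
      exact Set.disjoint_left.1 M.disjAB haA (h ▸ hbB)
    have hu : IsUnit (κ (M.m a) a) := hInv.unitp a (List.mem_cons_self)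
    have hu0 : κ (M.m a) a ≠ 0 := hu.ne_zero
    have hdimb : X.dim (M.m a) = X.dim a + 1 := hInv.dimr _ _ hu0
    have hκaa : κ a a = 0 := by
      by_contra h
      have := hInv.dimr a a h
      omega
    have hκbb : κ (M.m a) (M.m a) = 0 := by
      by_contra h
      have := hInv.dimr (M.m a) (M.m a) h
      omega
    have haTT : a ∈ M.C ∪ pairSet M (a :: t) :=
      Or.inr ⟨a, List.mem_cons_self, Or.inl rfl⟩
    have hbTT : M.m a ∈ M.C ∪ pairSet M (a :: t) :=
      Or.inr ⟨a, List.mem_cons_self, Or.inr rfl⟩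
    have haT' : a ∉ M.C ∪ pairSet M t := by
      rintro (h | ⟨c, hc, hcc | hcc⟩)
      · exact Set.disjoint_left.1 M.disjAC haA h
      · exact hat (hcc ▸ hc)
      · exact Set.disjoint_left.1 M.disjAB haA (hcc ▸ M.bij.mapsTo (htA c hc))
    have hbT' : M.m a ∉ M.C ∪ pairSet M t := by
      rintro (h | ⟨c, hc, hcc | hcc⟩)
      · exact Set.disjoint_left.1 M.disjBC hbB h
      · exact Set.disjoint_left.1 M.disjAB (htA c hc) (hcc ▸ hbB)
      · exact hat ((M.bij.injOn haA (htA c hc) hcc) ▸ hc)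
    have hsubTT : M.C ∪ pairSet M t ⊆ M.C ∪ pairSet M (a :: t) := by
      rintro x (h | ⟨c, hc, hcc⟩)
      · exact Or.inl h
      · exact Or.inr ⟨c, List.mem_cons_of_mem a hc, hcc⟩
    have hT' : M.C ∪ pairSet M t
        = (M.C ∪ pairSet M (a :: t)) \ {a, M.m a} := by
      ext x
      constructor
      · intro hx
        refine ⟨hsubTT hx, ?_⟩
        intro hmem2
        rcases hmem2 with h | h
        · exact haT' (h ▸ hx)
        · exact hbT' (h ▸ hx)
      · rintro ⟨hx, hnx⟩
        rcases hx with h | ⟨c, hc, hcc⟩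
        · exact Or.inl h
        · rcases List.mem_cons.1 hc with rfl | hct
          · exfalso
            rcases hcc with h | h
            · exact hnx (Or.inl h)
            · exact hnx (Or.inr h)
          · exact Or.inr ⟨c, hct, hcc⟩
    have hdead : ∀ τ, τ ∉ M.C ∪ pairSet M (a :: t) →
        (∀ η, κ η τ = 0) ∨ (∀ ξ, κ τ ξ = 0) := by
      intro τ hτ
      have hτu : τ ∈ M.A ∪ M.B ∪ M.C := by
        rw [M.cover]; trivial
      rcases hτu with (hA | hB) | hC
      · left
        refine hInv.deadA τ hA (fun hmem3 => hτ (Or.inr ⟨τ, hmem3, Or.inl rfl⟩))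
      · right
        obtain ⟨c, hcA, rfl⟩ := M.bij.surjOn hB
        refine hInv.deadB c hcA (fun hmem3 => hτ (Or.inr ⟨c, hmem3, Or.inr rfl⟩))
      · exact absurd (Or.inl hC) hτ
    -- evaluation of the restricted index
    have hlam_in : ∀ {η ξ : S}, η ∈ M.C ∪ pairSet M (a :: t) →
        ξ ∈ M.C ∪ pairSet M (a :: t) →
        restrictKappa κ (M.C ∪ pairSet M (a :: t)) η ξ = κ η ξ := by
      intro η ξ hη hξ
      exact if_pos ⟨hη, hξ⟩
    have hlam_ne : ∀ {η ξ : S}, restrictKappa κ (M.C ∪ pairSet M (a :: t)) η ξ ≠ 0 →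
        κ η ξ ≠ 0 ∧ η ∈ M.C ∪ pairSet M (a :: t) ∧ ξ ∈ M.C ∪ pairSet M (a :: t) := by
      intro η ξ h
      by_cases hc : η ∈ M.C ∪ pairSet M (a :: t) ∧ ξ ∈ M.C ∪ pairSet M (a :: t)
      · refine ⟨?_, hc.1, hc.2⟩
        rw [restrictKappa, if_pos hc] at h
        exact h
      · exact absurd (if_neg hc) h
    have hlam_out : ∀ {η ξ : S},
        ¬(η ∈ M.C ∪ pairSet M (a :: t) ∧ ξ ∈ M.C ∪ pairSet M (a :: t)) →
        restrictKappa κ (M.C ∪ pairSet M (a :: t)) η ξ = 0 := by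
      intro η ξ h
      exact if_neg h
    have hdsqlam : ∀ η ξ, ∑ τ, restrictKappa κ (M.C ∪ pairSet M (a :: t)) η τ
        * restrictKappa κ (M.C ∪ pairSet M (a :: t)) τ ξ = 0 := by
      intro η ξ
      by_cases hη : η ∈ M.C ∪ pairSet M (a :: t)
      · by_cases hξ : ξ ∈ M.C ∪ pairSet M (a :: t)
        · have hterm : ∀ τ, restrictKappa κ (M.C ∪ pairSet M (a :: t)) η τ
              * restrictKappa κ (M.C ∪ pairSet M (a :: t)) τ ξ = κ η τ * κ τ ξ := by
            intro τ
            by_cases hτ : τ ∈ M.C ∪ pairSet M (a :: t)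
            · rw [hlam_in hη hτ, hlam_in hτ hξ]
            · rw [hlam_out (fun hc => hτ hc.2)]
              rcases hdead τ hτ with h | h
              · rw [h η, zero_mul, zero_mul]
              · rw [h ξ, mul_zero, zero_mul]
          rw [Finset.sum_congr rfl fun τ _ => hterm τ, hInv.dsq η ξ]
        · refine Finset.sum_eq_zero fun τ _ => ?_
          rw [hlam_out (fun hc => hξ hc.2), mul_zero]
      · refine Finset.sum_eq_zero fun τ _ => ?_
        rw [hlam_out (fun hc => hη hc.1), zero_mul]
    obtain ⟨E1⟩ := stepEquiv (restrictKappa κ (M.C ∪ pairSet M (a :: t))) a (M.m a)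
      (by rw [hlam_in hbTT haTT]; exact hu) hneab
      (by rw [hlam_in haTT haTT]; exact hκaa)
      (by rw [hlam_in hbTT hbTT]; exact hκbb)
      hdsqlam
      ((F α ∩ (M.C ∪ pairSet M (a :: t))) ∩ {σ | X.dim σ = q})
      ((F β ∩ (M.C ∪ pairSet M (a :: t))) ∩ {σ | X.dim σ = q + 1})
      (by
        intro η hη h0
        obtain ⟨hκ1, hηTT, _⟩ := hlam_ne h0
        have haF : a ∈ F α := hInv.face α η a hη.1.1 hκ1
        have hdimη := hInv.dimr η a hκ1
        have hdη : X.dim η = q := hη.2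
        exact ⟨⟨hcompat α a haA haF, hbTT⟩, by simp only [Set.mem_setOf_eq]; omega⟩)
      (by
        intro ha2 ξ hξa h0
        obtain ⟨hκ1, _, hξTT⟩ := hlam_ne h0
        have haF : a ∈ F α := ha2.1.1
        have hdξ := hInv.dimr (M.m a) ξ hκ1
        have hda : X.dim a = q := ha2.2
        exact ⟨⟨hInv.face α (M.m a) ξ (hcompat α a haA haF) hκ1, hξTT⟩,
          by simp only [Set.mem_setOf_eq]; omega⟩)
      (by
        intro η hη h0
        obtain ⟨hκ1, hηTT, _⟩ := hlam_ne h0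
        have haF : a ∈ F β := hInv.face β η a hη.1.1 hκ1
        have hdimη := hInv.dimr η a hκ1
        have hdη : X.dim η = q + 1 := hη.2
        exact ⟨⟨hcompat β a haA haF, hbTT⟩, by simp only [Set.mem_setOf_eq]; omega⟩)
      (by
        intro ha2 ξ hξa h0
        obtain ⟨hκ1, _, hξTT⟩ := hlam_ne h0
        have haF : a ∈ F β := ha2.1.1
        have hdξ := hInv.dimr (M.m a) ξ hκ1
        have hda : X.dim a = q + 1 := ha2.2
        exact ⟨⟨hInv.face β (M.m a) ξ (hcompat β a haA haF) hκ1, hξTT⟩,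
          by simp only [Set.mem_setOf_eq]; omega⟩)
      (by
        intro ha2
        have haF : a ∈ F β := hmono α β hαβ ha2.1.1
        have hda : X.dim a = q := ha2.2
        exact ⟨⟨hcompat β a haA haF, hbTT⟩, by simp only [Set.mem_setOf_eq]; omega⟩)
    -- rewrite the target of E1
    have hsetz : ((F α ∩ (M.C ∪ pairSet M (a :: t))) ∩ {σ | X.dim σ = q}) \ {a, M.m a}
        = (F α ∩ (M.C ∪ pairSet M t)) ∩ {σ | X.dim σ = q} := by
      rw [hT']
      ext x
      simp only [Set.mem_diff, Set.mem_inter_iff]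
      tauto
    have hsetb : ((F β ∩ (M.C ∪ pairSet M (a :: t))) ∩ {σ | X.dim σ = q + 1}) \ {a, M.m a}
        = (F β ∩ (M.C ∪ pairSet M t)) ∩ {σ | X.dim σ = q + 1} := by
      rw [hT']
      ext x
      simp only [Set.mem_diff, Set.mem_inter_iff]
      tauto
    have hmu : muMat (restrictKappa κ (M.C ∪ pairSet M (a :: t))) a (M.m a)
        = restrictKappa (reduceOne M.m a κ) (M.C ∪ pairSet M t) := by
      funext η ξ
      by_cases hηξ : η ∈ M.C ∪ pairSet M t ∧ ξ ∈ M.C ∪ pairSet M t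
      · have hηa : ¬(η = a ∨ η = M.m a ∨ ξ = a ∨ ξ = M.m a) := by
          rintro (h | h | h | h)
          · exact haT' (h ▸ hηξ.1)
          · exact hbT' (h ▸ hηξ.1)
          · exact haT' (h ▸ hηξ.2)
          · exact hbT' (h ▸ hηξ.2)
        have hηTT := hsubTT hηξ.1
        have hξTT := hsubTT hηξ.2
        have hR : restrictKappa (reduceOne M.m a κ) (M.C ∪ pairSet M t) η ξ
            = reduceOne M.m a κ η ξ := if_pos hηξ
        rw [hR]
        show (if η = a ∨ η = M.m a ∨ ξ = a ∨ ξ = M.m a then 0 else _) = _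
        rw [if_neg hηa, hlam_in hηTT hξTT, hlam_in hηTT haTT,
          hlam_in hbTT haTT, hlam_in hbTT hξTT]
        rfl
      · rw [show restrictKappa (reduceOne M.m a κ) (M.C ∪ pairSet M t) η ξ = 0
          from if_neg hηξ]
        by_cases hcond : η = a ∨ η = M.m a ∨ ξ = a ∨ ξ = M.m a
        · exact if_pos hcond
        · push_neg at hcond
          obtain ⟨h1, h2, h3, h4⟩ := hcond
          show (if η = a ∨ η = M.m a ∨ ξ = a ∨ ξ = M.m a then 0 else _) = _
          rw [if_neg (by tauto)]
          by_cases hη2 : η ∈ M.C ∪ pairSet M t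
          · have hξ2 : ξ ∉ M.C ∪ pairSet M t := fun h => hηξ ⟨hη2, h⟩
            have hξTT : ξ ∉ M.C ∪ pairSet M (a :: t) := by
              intro h
              exact hξ2 (by rw [hT']; exact ⟨h, by simp [h3, h4]⟩)
            rw [hlam_out (fun hc => hξTT hc.2), hlam_out (fun hc => hξTT hc.2)]
            simp
          · have hηTT : η ∉ M.C ∪ pairSet M (a :: t) := by
              intro h
              exact hη2 (by rw [hT']; exact ⟨h, by simp [h1, h2]⟩)
            rw [hlam_out (fun hc => hηTT hc.1), hlam_out (fun hc => hηTT hc.1)]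
            simp
    rw [hsetz, hsetb, hmu] at E1
    obtain ⟨E2⟩ := ih hndt htA (reduceOne M.m a κ)
      (redInv_step hac hcompat hInv haA htA hat)
    rw [show reduceList M.m (a :: t) κ = reduceList M.m t (reduceOne M.m a κ) from rfl]
    exact ⟨E1.trans E2⟩

end Main

/-- performing the successive reductions at all the matched pairs
`(m (A i), A i)`, `A = {A 1, …, A n}` enumerated by the list `l`, yields a final
complex with underlying set `C`, and for every `α ⪯ β` and every `q` the `q`-th
persistent homology of `S` is isomorphic to that of `C` (with the filtration induced
by intersection). -/
theorem stmt18 {R S : Type*} [CommRing R] [IsDomain R] [IsPrincipalIdealRing R]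
    [Fintype S] [DecidableEq S] {k : ℕ} (X : SComplex R S) (M : PartialMatching X)
    (hac : M.Acyclic)
    (F : (Fin k → ℝ) → Set S)
    (hmono : ∀ α β : Fin k → ℝ, α ≤ β → F α ⊆ F β)
    (hface : ∀ (α : Fin k → ℝ) (σ τ : S), σ ∈ F α → X.κ σ τ ≠ 0 → τ ∈ F α)
    (hcompat : ∀ (α : Fin k → ℝ), ∀ σ ∈ M.A, σ ∈ F α → M.m σ ∈ F α)
    (l : List S) (hnd : l.Nodup) (hlA : ∀ a : S, a ∈ l ↔ a ∈ M.A) :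
    ∀ (α β : Fin k → ℝ), α ≤ β → ∀ q : ℕ,
      Nonempty
        (persHom X.κ (F α ∩ {σ | X.dim σ = q}) (F β ∩ {σ | X.dim σ = q + 1}) ≃ₗ[R]
          persHom (restrictKappa (reduceList M.m l X.κ) M.C)
            ((F α ∩ M.C) ∩ {σ | X.dim σ = q})
            ((F β ∩ M.C) ∩ {σ | X.dim σ = q + 1})) := by
  intro α β hαβ q
  have base : RedInvt X M F X.κ l :=
    ⟨X.dsq, X.dim_rule, hface, fun c hc => M.unit c ((hlA c).1 hc),
      fun τ hτ σ hσ hne h => Relation.TransGen.single ⟨hτ, hσ, hne, h⟩,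
      fun c hcA hcl _ => absurd ((hlA c).2 hcA) hcl,
      fun c hcA hcl _ => absurd ((hlA c).2 hcA) hcl⟩
  obtain ⟨E⟩ := mainInd X M hac F hmono hcompat α β hαβ q l hnd
    (fun c hc => (hlA c).1 hc) X.κ base
  have huniv : M.C ∪ pairSet M l = Set.univ := by
    ext x
    simp only [Set.mem_univ, iff_true]
    have hx : x ∈ M.A ∪ M.B ∪ M.C := by rw [M.cover]; trivial
    rcases hx with (hA | hB) | hC
    · exact Or.inr ⟨x, (hlA x).2 hA, Or.inl rfl⟩
    · obtain ⟨c, hcA, rfl⟩ := M.bij.surjOn hB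
      exact Or.inr ⟨c, (hlA c).2 hcA, Or.inr rfl⟩
    · exact Or.inl hC
  rw [huniv, show restrictKappa X.κ Set.univ = X.κ from by
      funext η ξ; simp [restrictKappa],
    Set.inter_univ, Set.inter_univ] at E
  exact ⟨E⟩
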